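/- Let r ≥ 1, m ≥ 3, and n ≥ max(r,2) be integers, and let 1 ≤ i ≤ n−1. Then there exist n-tuples α(1),...,α(m) of real numbers, where α(1) is weakly decreasing with α_i(1) = α_{i+1}(1) and α_j(1) > α_{j+1}(1) for all j ≠ i, and α(2),...,α(m) are strictly decreasing, such that Σ_{s=1}^m Σ_{i'∈I(s)} α_{i'}(s) > 0 for every 1 ≤ t ≤ n and every (I(1),...,I(m)) ∈ R^n_t(m), and Σ_{s=1}^m Σ_{p∈P(s)} α_{n+1−p}(s) < 0 for every 1 ≤ t ≤ n−r and every (P(1),...,P(m)) ∈ R^{n−r}_t(m). -/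

import Mathlib

open MvPolynomial

/-- Complete homogeneous symmetric polynomial of degree `d` in `t` variables. -/
noncomputable def completeHom (t d : ℕ) : MvPolynomial (Fin t) ℤ :=
  ∑ μ ∈ (Finset.univ : Finset (Fin t)).sym d, ((μ : Multiset (Fin t)).map X).prod

/-- `h_d` for integer `d`, zero for negative `d`. -/
noncomputable def completeHomZ (t : ℕ) (d : ℤ) : MvPolynomial (Fin t) ℤ :=
  if 0 ≤ d then completeHom t d.toNat else 0

/-- The Schur polynomial `s_{λ(I)} = det (h_{a_i - j})` in `t` variables, for a subset
`I ⊆ {0,…,n-1}` identified with the subset `{a+1 | a ∈ I}` of `[n] = {1,…,n}`. -/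
noncomputable def schurOfSet (n t : ℕ) (I : Finset (Fin n)) : MvPolynomial (Fin t) ℤ :=
  Matrix.det (Matrix.of fun i j : Fin t =>
    completeHomZ t ((((I.sort (· ≤ ·)).map (fun a => (a : ℕ) + 1)).getD (i : ℕ) 0 : ℤ)
      - ((j : ℕ) + 1)))

/-- The Vandermonde product `∏_{i<j} (x_i - x_j)` in `t` variables. -/
noncomputable def vandProd (t : ℕ) : MvPolynomial (Fin t) ℤ :=
  ∏ p ∈ Finset.univ.filter (fun p : Fin t × Fin t => p.1 < p.2), (X p.1 - X p.2)

/-- The coefficient of the Schur polynomial `s_μ` in the Schur-basis expansion of a symmetric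
polynomial `f` in `t` variables: the coefficient of `x_1^{μ_1+t-1} ⋯ x_t^{μ_t}` in
`f · ∏_{i<j} (x_i - x_j)`. -/
noncomputable def schurCoeff (t : ℕ) (μ : Fin t → ℕ) (f : MvPolynomial (Fin t) ℤ) : ℤ :=
  MvPolynomial.coeff (Finsupp.equivFunOnFinite.symm fun i : Fin t => μ i + (t - 1 - (i : ℕ)))
    (f * vandProd t)

/-- Membership in `R^n_t(m)`: a sequence of cardinality-`t` subsets of `[n]` such that the
coefficient of the rectangular Schur polynomial `s_{((n-t)^t)}` in `s_{λ(I(1))} ⋯ s_{λ(I(m))}`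
equals 1. -/
def memR (n t m : ℕ) (I : Fin m → Finset (Fin n)) : Prop :=
  (∀ s, (I s).card = t) ∧
    schurCoeff t (fun _ => n - t) (∏ s, schurOfSet n t (I s)) = 1

/-- Membership in `S^n_t(m)`: a sequence of cardinality-`t` subsets of `[n]` such that the
coefficient of `s_μ` in `s_{λ(I(1))} ⋯ s_{λ(I(m))}` is nonzero for some partition `μ` with at
most `t` parts, each at most `n - t`. -/
def memS (n t m : ℕ) (I : Fin m → Finset (Fin n)) : Prop :=
  (∀ s, (I s).card = t) ∧
    ∃ μ : Fin t → ℕ, Antitone μ ∧ (∀ i, μ i ≤ n - t) ∧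
      schurCoeff t μ (∏ s, schurOfSet n t (I s)) ≠ 0

/-- Condition `(⊳_n)` on `n`-tuples `α(1),…,α(m)` (0-indexed: `α s i` is `α_{i+1}(s)`). -/
def CondMajor (n m : ℕ) (α : Fin m → Fin n → ℝ) : Prop :=
  ∀ t : ℕ, 1 ≤ t → t ≤ n → ∀ I : Fin m → Finset (Fin n), memR n t m I →
    0 ≤ ∑ s, ∑ i ∈ I s, α s i

/-- Condition `(⊲_{n,r})`: for `p ∈ P(s) ⊆ [n-r]`, the term is `α_{n+1-p}(s)`. -/
def CondRank (n r m : ℕ) (α : Fin m → Fin n → ℝ) : Prop :=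
  ∀ t : ℕ, 1 ≤ t → t ≤ n - r → ∀ P : Fin m → Finset (Fin (n - r)), memR (n - r) t m P →
    ∑ s, ∑ q ∈ P s, α s ((Fin.castLE (Nat.sub_le n r)) q).rev ≤ 0

/-- `A` is Hermitian with eigenvalue multiset `{α_1,…,α_n}`. -/
def HasEigenvalues {n : ℕ} (A : Matrix (Fin n) (Fin n) ℂ) (α : Fin n → ℝ) : Prop :=
  ∃ hA : A.IsHermitian,
    Multiset.map hA.eigenvalues Finset.univ.val = Multiset.map α Finset.univ.val

lemma hom_multiset_prod (t : ℕ) (s : Multiset (Fin t)) :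
    (((s.map X).prod : MvPolynomial (Fin t) ℤ)).IsHomogeneous (Multiset.card s) := by
  induction s using Multiset.induction with
  | empty => simpa using isHomogeneous_one (Fin t) ℤ
  | cons a s ih =>
      rw [Multiset.map_cons, Multiset.prod_cons, Multiset.card_cons, add_comm]
      exact (isHomogeneous_X ℤ a).mul ih

lemma hom_completeHom (t d : ℕ) : (completeHom t d).IsHomogeneous d := by
  apply IsHomogeneous.sum
  intro μ hμ
  have hc : Multiset.card (μ : Multiset (Fin t)) = d := μ.2
  simpa [hc] using hom_multiset_prod t (μ : Multiset (Fin t))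

lemma hom_completeHomZ (t : ℕ) (d : ℤ) : (completeHomZ t d).IsHomogeneous d.toNat := by
  unfold completeHomZ
  split
  · exact hom_completeHom t d.toNat
  · exact isHomogeneous_zero _ _ _

lemma completeHomZ_neg (t : ℕ) {d : ℤ} (hd : d < 0) : completeHomZ t d = 0 := by
  simp [completeHomZ, not_le.mpr hd]

/-- the `i`-th entry `a_i + 1` of the sorted list. -/
def lv (n t : ℕ) (I : Finset (Fin n)) (i : Fin t) : ℕ :=
  (((I.sort (· ≤ ·)).map (fun a => (a : ℕ) + 1)).getD (i : ℕ) 0)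

lemma perm_term (n t : ℕ) (I : Finset (Fin n)) (σ : Equiv.Perm (Fin t)) :
    (∏ k : Fin t, completeHomZ t ((lv n t I (σ k) : ℤ) - ((k : ℕ) + 1))).IsHomogeneous
      ((∑ k : Fin t, lv n t I k) - (∑ k : Fin t, ((k : ℕ) + 1))) ∨
    (∏ k : Fin t, completeHomZ t ((lv n t I (σ k) : ℤ) - ((k : ℕ) + 1))) = 0 := by
  by_cases hall : ∀ k : Fin t, ((k : ℕ) + 1 : ℤ) ≤ lv n t I (σ k)
  · left
    have h := IsHomogeneous.prod Finset.univ
      (fun k : Fin t => completeHomZ t ((lv n t I (σ k) : ℤ) - ((k : ℕ) + 1)))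
      (fun k : Fin t => ((lv n t I (σ k) : ℤ) - ((k : ℕ) + 1)).toNat)
      (fun k _ => hom_completeHomZ t _)
    have hsum : (∑ k : Fin t, ((lv n t I (σ k) : ℤ) - ((k : ℕ) + 1)).toNat)
        = (∑ k : Fin t, lv n t I k) - (∑ k : Fin t, ((k : ℕ) + 1)) := by
      have h1 : ((∑ k : Fin t, ((lv n t I (σ k) : ℤ) - ((k : ℕ) + 1)).toNat : ℕ) : ℤ)
          = ∑ k : Fin t, ((lv n t I (σ k) : ℤ) - ((k : ℕ) + 1)) := by
        push_cast
        refine Finset.sum_congr rfl fun k _ => ?_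
        rw [Int.toNat_of_nonneg (by linarith [hall k])]
      have h2 : (∑ k : Fin t, ((lv n t I (σ k) : ℤ) - ((k : ℕ) + 1)))
          = (∑ k : Fin t, (lv n t I k : ℤ)) - (∑ k : Fin t, (((k : ℕ) : ℤ) + 1)) := by
        rw [Finset.sum_sub_distrib]
        congr 1
        exact Equiv.sum_comp σ (fun k => (lv n t I k : ℤ))
      have hle : (∑ k : Fin t, ((k : ℕ) + 1)) ≤ (∑ k : Fin t, lv n t I k) := by
        have hnn : (0 : ℤ) ≤ ∑ k : Fin t, ((lv n t I (σ k) : ℤ) - ((k : ℕ) + 1)) :=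
          Finset.sum_nonneg fun k _ => by linarith [hall k]
        rw [h2] at hnn
        have : ((∑ k : Fin t, ((k : ℕ) + 1) : ℕ) : ℤ) ≤ ((∑ k : Fin t, lv n t I k : ℕ) : ℤ) := by
          push_cast at hnn ⊢; linarith
        exact_mod_cast this
      have : ((∑ k : Fin t, ((lv n t I (σ k) : ℤ) - ((k : ℕ) + 1)).toNat : ℕ) : ℤ)
          = (((∑ k : Fin t, lv n t I k) - (∑ k : Fin t, ((k : ℕ) + 1)) : ℕ) : ℤ) := by
        rw [h1, h2, Nat.cast_sub hle]; push_cast; ring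
      exact_mod_cast this
    rw [hsum] at h
    exact h
  · right
    push_neg at hall
    obtain ⟨k, hk⟩ := hall
    exact Finset.prod_eq_zero (Finset.mem_univ k) (completeHomZ_neg t (by linarith))

lemma hom_schurOfSet (n t : ℕ) (I : Finset (Fin n)) :
    (schurOfSet n t I).IsHomogeneous
      ((∑ k : Fin t, lv n t I k) - (∑ k : Fin t, ((k : ℕ) + 1))) := by
  rw [schurOfSet, Matrix.det_apply]
  apply IsHomogeneous.sum
  intro σ _
  rw [Units.smul_def, smul_eq_C_mul]
  have hterm : (∏ k : Fin t, (Matrix.of fun i j : Fin t =>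
      completeHomZ t ((((I.sort (· ≤ ·)).map (fun a => (a : ℕ) + 1)).getD (i : ℕ) 0 : ℤ)
        - ((j : ℕ) + 1))) (σ k) k)
      = ∏ k : Fin t, completeHomZ t ((lv n t I (σ k) : ℤ) - ((k : ℕ) + 1)) := rfl
  rw [hterm]
  rcases perm_term n t I σ with h | h
  · simpa using (isHomogeneous_C (Fin t) ((Equiv.Perm.sign σ : ℤ))).mul h
  · rw [h, mul_zero]; exact isHomogeneous_zero _ _ _

lemma schurOfSet_eq_zero (n t : ℕ) (I : Finset (Fin n))
    (hlt : (∑ k : Fin t, lv n t I k) < (∑ k : Fin t, ((k : ℕ) + 1))) :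
    schurOfSet n t I = 0 := by
  rw [schurOfSet, Matrix.det_apply]
  apply Finset.sum_eq_zero
  intro σ _
  have hterm : (∏ k : Fin t, (Matrix.of fun i j : Fin t =>
      completeHomZ t ((((I.sort (· ≤ ·)).map (fun a => (a : ℕ) + 1)).getD (i : ℕ) 0 : ℤ)
        - ((j : ℕ) + 1))) (σ k) k)
      = ∏ k : Fin t, completeHomZ t ((lv n t I (σ k) : ℤ) - ((k : ℕ) + 1)) := rfl
  have hz : (∏ k : Fin t, completeHomZ t ((lv n t I (σ k) : ℤ) - ((k : ℕ) + 1))) = 0 := by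
    have hs : (∑ k : Fin t, ((lv n t I (σ k) : ℤ) - ((k : ℕ) + 1))) < 0 := by
      have h2 : (∑ k : Fin t, ((lv n t I (σ k) : ℤ) - ((k : ℕ) + 1)))
          = (∑ k : Fin t, (lv n t I k : ℤ)) - (∑ k : Fin t, (((k : ℕ) : ℤ) + 1)) := by
        rw [Finset.sum_sub_distrib]
        congr 1
        exact Equiv.sum_comp σ (fun k => (lv n t I k : ℤ))
      rw [h2]
      have : ((∑ k : Fin t, lv n t I k : ℕ) : ℤ) < ((∑ k : Fin t, ((k : ℕ) + 1) : ℕ) : ℤ) := by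
        exact_mod_cast hlt
      push_cast at this ⊢
      linarith
    by_contra hne
    have hex : ∃ k ∈ Finset.univ, ((lv n t I (σ k) : ℤ) - ((k : ℕ) + 1)) < 0 := by
      by_contra hno
      push_neg at hno
      exact absurd (Finset.sum_nonneg hno) (not_le.mpr hs)
    obtain ⟨k, _, hk⟩ := hex
    exact hne (Finset.prod_eq_zero (Finset.mem_univ k) (completeHomZ_neg t hk))
  rw [hterm, hz, smul_zero]

lemma hom_vandProd (t : ℕ) :
    (vandProd t).IsHomogeneous
      (Finset.univ.filter (fun p : Fin t × Fin t => p.1 < p.2)).card := by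
  have h := IsHomogeneous.prod (Finset.univ.filter (fun p : Fin t × Fin t => p.1 < p.2))
    (fun p => (X p.1 - X p.2 : MvPolynomial (Fin t) ℤ)) (fun _ => 1)
    (fun p _ => (isHomogeneous_X ℤ p.1).sub (isHomogeneous_X ℤ p.2))
  rw [Finset.sum_const, smul_eq_mul, mul_one] at h
  exact h

lemma card_filter_lt (t : ℕ) :
    (Finset.univ.filter (fun p : Fin t × Fin t => p.1 < p.2)).card
      = ∑ k : Fin t, (t - 1 - (k : ℕ)) := by
  rw [Finset.card_eq_sum_card_fiberwise (f := Prod.fst) (t := Finset.univ)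
    (fun x _ => Finset.mem_univ _)]
  refine Finset.sum_congr rfl fun i _ => ?_
  rw [← Fin.card_Ioi i]
  apply Finset.card_nbij (fun p => p.2)
  · intro p hp
    simp only [Finset.mem_coe, Finset.mem_filter, Finset.mem_univ, true_and] at hp
    exact Finset.mem_Ioi.mpr (hp.2 ▸ hp.1)
  · intro p hp q hq hpq
    simp only [Finset.mem_coe, Finset.mem_filter, Finset.mem_univ, true_and] at hp hq
    exact Prod.ext (hp.2.trans hq.2.symm) hpq
  · intro j hj
    simp only [Finset.coe_Ioi, Set.mem_Ioi] at hj
    exact ⟨(i, j), by simp [hj], rfl⟩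

lemma coe_list_eq (n : ℕ) (l : List (Fin n)) :
    ((l.map (fun a => (a : ℕ) + 1)) : List ℕ)
      = List.map (fun a : Fin n => (a : ℕ) + 1) l := by
  have h : ∀ l' : List (Fin n),
      (List.map (fun a : ℕ => a + 1) (l'.flatMap fun a => [(a : ℕ)]))
        = List.map (fun a : Fin n => (a : ℕ) + 1) l' := by
    intro l'
    induction l' with
    | nil => rfl
    | cons a l' ih => simp_all
  simpa using h l

lemma sum_getD {l : List ℕ} {t : ℕ} (hlen : l.length = t) :
    ∑ k : Fin t, l.getD (k : ℕ) 0 = l.sum := by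
  subst hlen
  conv_rhs => rw [← List.ofFn_get l, List.sum_ofFn]
  exact Finset.sum_congr rfl fun k _ => List.getD_eq_getElem l 0 k.isLt

lemma map_sort_sum (n : ℕ) (I : Finset (Fin n)) (f : Fin n → ℕ) :
    ((I.sort (· ≤ ·)).map f).sum = ∑ a ∈ I, f a := by
  rw [((I.sort_perm_toList (· ≤ ·)).map f).sum_eq, Finset.sum_eq_multiset_sum, Finset.toList]
  conv_rhs => rw [← Multiset.coe_toList I.val]
  rw [Multiset.map_coe, Multiset.sum_coe]

lemma sum_lv {n t : ℕ} (I : Finset (Fin n)) (hc : I.card = t) :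
    ∑ k : Fin t, lv n t I k = ∑ a ∈ I, ((a : ℕ) + 1) := by
  unfold lv
  rw [show ((I.sort (· ≤ ·)).map (fun a => (a : ℕ) + 1) : List ℕ)
      = List.map (fun a : Fin n => (a : ℕ) + 1) (I.sort (· ≤ ·)) from coe_list_eq n _]
  rw [sum_getD (by rw [List.length_map, Finset.length_sort, hc])]
  exact map_sort_sum n I _

lemma degree_equivFun {t : ℕ} (g : Fin t → ℕ) :
    (Finsupp.equivFunOnFinite.symm g).degree = ∑ k : Fin t, g k := by
  rw [Finsupp.degree]
  exact Finset.sum_subset (Finset.subset_univ _)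
    (by intro x _ hx; simpa using Finsupp.notMem_support_iff.mp hx)

/-- The key degree identity: if the rectangular Schur coefficient is nonzero then the total
sum of the (1-indexed) elements of the sets is determined. -/
lemma key_sum (n t m : ℕ) (I : Fin m → Finset (Fin n))
    (hcard : ∀ s, (I s).card = t)
    (hc : schurCoeff t (fun _ => n - t) (∏ s, schurOfSet n t (I s)) ≠ 0) :
    ∑ s, ∑ a ∈ I s, ((a : ℕ) + 1)
      = t * (n - t) + m * (∑ k : Fin t, ((k : ℕ) + 1)) := by
  set T := ∑ k : Fin t, ((k : ℕ) + 1) with hT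
  set V := (Finset.univ.filter (fun p : Fin t × Fin t => p.1 < p.2)).card with hV
  set L : Fin m → ℕ := fun s => ∑ k : Fin t, lv n t (I s) k with hL
  -- every L s ≥ T
  have hTL : ∀ s, T ≤ L s := by
    intro s
    by_contra hlt
    push_neg at hlt
    have hz : schurOfSet n t (I s) = 0 := schurOfSet_eq_zero n t (I s) hlt
    have : (∏ s', schurOfSet n t (I s')) = 0 :=
      Finset.prod_eq_zero (Finset.mem_univ s) hz
    apply hc
    rw [schurCoeff, this, zero_mul, coeff_zero]
  -- homogeneity of the full product times Vandermonde
  have hhom : ((∏ s, schurOfSet n t (I s)) * vandProd t).IsHomogeneous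
      ((∑ s, (L s - T)) + V) :=
    (IsHomogeneous.prod Finset.univ _ _ (fun s _ => hom_schurOfSet n t (I s))).mul
      (hom_vandProd t)
  -- degree of the target monomial
  have hdeg : (Finsupp.equivFunOnFinite.symm
        fun k : Fin t => (fun _ : Fin t => n - t) k + (t - 1 - (k : ℕ))).degree
      = t * (n - t) + V := by
    rw [degree_equivFun, Finset.sum_add_distrib, Finset.sum_const, Finset.card_univ,
      Fintype.card_fin, smul_eq_mul, hV, card_filter_lt]
  -- the coefficient equation forces degree equality
  have heq : (∑ s, (L s - T)) + V = t * (n - t) + V := by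
    by_contra hne
    exact hc (by
      rw [schurCoeff]
      exact hhom.coeff_eq_zero (by rw [hdeg]; exact fun h => hne h.symm))
  have heq2 : (∑ s, (L s - T)) = t * (n - t) := Nat.add_right_cancel heq
  -- remove the truncated subtraction
  have hsumL : (∑ s, L s) = t * (n - t) + m * T := by
    have hz : ((∑ s, (L s - T) : ℕ) : ℤ) = (∑ s : Fin m, (L s : ℤ)) - m * T := by
      rw [Nat.cast_sum]
      have h1 : ∑ s : Fin m, ((L s - T : ℕ) : ℤ) = ∑ s : Fin m, ((L s : ℤ) - (T : ℤ)) :=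
        Finset.sum_congr rfl (fun s _ => Nat.cast_sub (hTL s))
      rw [h1, Finset.sum_sub_distrib, Finset.sum_const, Finset.card_univ, Fintype.card_fin,
        nsmul_eq_mul]
    have h3 : (∑ s : Fin m, (L s : ℤ)) = (t * (n - t) : ℕ) + m * T := by
      rw [heq2] at hz
      linarith [hz]
    have h4 : ((∑ s, L s : ℕ) : ℤ) = ((t * (n - t) + m * T : ℕ) : ℤ) := by
      push_cast at h3 ⊢
      linarith [h3]
    exact_mod_cast h4
  rw [← hsumL, hL]
  exact Finset.sum_congr rfl fun s _ => (sum_lv (I s) (hcard s)).symm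

lemma two_T (t : ℕ) : 2 * (∑ k : Fin t, ((k : ℕ) + 1)) = t * (t + 1) := by
  rw [Fin.sum_univ_eq_sum_range (fun k => k + 1) t, Finset.sum_add_distrib,
    Finset.sum_const, Finset.card_range, smul_eq_mul, mul_one]
  have h := Finset.sum_range_id_mul_two t
  cases t with
  | zero => simp
  | succ k =>
      simp only [Nat.succ_sub_one] at h
      nlinarith [h]


lemma sum_split {β : Type*} (m : ℕ) (hm : 0 < m) (C : ℝ) (i : ℕ) (t : ℕ)
    (J : Fin m → Finset β) (g : β → ℕ) (hcard : ∀ s, (J s).card = t) :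
    ∑ s : Fin m, ∑ j ∈ J s, ((if (s : ℕ) = 0 then C else 0) - ((g j : ℝ) + 1)
        + (if (s : ℕ) = 0 ∧ i ≤ g j then (1 : ℝ) else 0))
      = (t : ℝ) * C - (∑ s : Fin m, ∑ j ∈ J s, ((g j : ℝ) + 1))
        + ∑ j ∈ J ⟨0, hm⟩, (if i ≤ g j then (1 : ℝ) else 0) := by
  have hinner : ∀ s : Fin m,
      ∑ j ∈ J s, ((if (s : ℕ) = 0 then C else 0) - ((g j : ℝ) + 1)
          + (if (s : ℕ) = 0 ∧ i ≤ g j then (1 : ℝ) else 0))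
        = (if (s : ℕ) = 0 then (t : ℝ) * C else 0) - (∑ j ∈ J s, ((g j : ℝ) + 1))
          + (if (s : ℕ) = 0 then (∑ j ∈ J s, (if i ≤ g j then (1 : ℝ) else 0)) else 0) := by
    intro s
    rw [Finset.sum_add_distrib, Finset.sum_sub_distrib]
    by_cases hs : (s : ℕ) = 0
    · simp only [hs, if_pos, true_and, Finset.sum_const, hcard s, nsmul_eq_mul, if_true]
    · simp only [hs, if_false, false_and, Finset.sum_const_zero, if_neg hs]
  rw [Finset.sum_congr rfl (fun s _ => hinner s), Finset.sum_add_distrib,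
    Finset.sum_sub_distrib]
  have hsingle : ∀ x : Fin m → ℝ,
      ∑ s : Fin m, (if (s : ℕ) = 0 then x s else 0) = x ⟨0, hm⟩ := by
    intro x
    rw [Finset.sum_eq_single (⟨0, hm⟩ : Fin m)]
    · rfl
    · intro s _ hs
      exact if_neg (fun h0 => hs (Fin.ext h0))
    · intro h; exact absurd (Finset.mem_univ _) h
  rw [hsingle (fun _ => (t : ℝ) * C), hsingle (fun s => ∑ j ∈ J s, (if i ≤ g j then (1:ℝ) else 0))]

lemma arith_major (X N R M K : ℝ) (h1 : 1 ≤ X) (h2 : X ≤ N) (h3 : 3 ≤ M) (h4 : 1 ≤ R)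
    (h5 : 0 ≤ K) :
    0 < X * (M * (N + R + 1) / 2 - 5/4) - (X * (N - X) + M * (X * (X + 1) / 2)) + K := by
  nlinarith [mul_nonneg (by linarith : (0:ℝ) ≤ X) (mul_nonneg (by linarith : (0:ℝ) ≤ M - 3)
      (by linarith : (0:ℝ) ≤ N - X + R)),
    mul_nonneg (by linarith : (0:ℝ) ≤ X) (by linarith : (0:ℝ) ≤ N - X),
    mul_nonneg (by linarith : (0:ℝ) ≤ X) (by linarith : (0:ℝ) ≤ R - 1)]

lemma arith_rank (X N R M K : ℝ) (h1 : 1 ≤ X) (h2 : X ≤ N - R) (h3 : 3 ≤ M) (h4 : K ≤ X) :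
    X * (M * (N + R + 1) / 2 - 5/4)
      - (M * (X * (N + 1)) - (X * (N - R - X) + M * (X * (X + 1) / 2))) + K < 0 := by
  nlinarith [mul_nonneg (mul_nonneg (by linarith : (0:ℝ) ≤ X)
      (by linarith : (0:ℝ) ≤ M - 2)) (by linarith : (0:ℝ) ≤ N - R - X)]

/-- For `r ≥ 1`, `m ≥ 3`, `n ≥ max(r,2)` and `1 ≤ i ≤ n-1`, there are `n`-tuples
`α(1),…,α(m)` with `α(1)` weakly decreasing having its only tie `α_i(1) = α_{i+1}(1)`
(here `α s j` denotes `α_{j+1}(s)`, so the tie is between 0-based positions `i-1` and `i`),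
`α(2),…,α(m)` strictly decreasing, for which all inequalities `(⊳_n)` and `(⊲_{n,r})`
are strict. -/
theorem exists_tuples_trace_facet (n r m i : ℕ)
    (hr : 1 ≤ r) (hm : 3 ≤ m) (hrn : r ≤ n) (hn2 : 2 ≤ n) (hi : 1 ≤ i) (hin : i ≤ n - 1) :
    ∃ α : Fin m → Fin n → ℝ,
      Antitone (α ⟨0, by omega⟩) ∧
      (∀ j : Fin n, ∀ h : (j : ℕ) + 1 < n,
        ((j : ℕ) = i - 1 → α ⟨0, by omega⟩ j = α ⟨0, by omega⟩ ⟨(j : ℕ) + 1, h⟩) ∧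
        ((j : ℕ) ≠ i - 1 → α ⟨0, by omega⟩ ⟨(j : ℕ) + 1, h⟩ < α ⟨0, by omega⟩ j)) ∧
      (∀ s : Fin m, s ≠ ⟨0, by omega⟩ → StrictAnti (α s)) ∧
      (∀ t : ℕ, 1 ≤ t → t ≤ n → ∀ I : Fin m → Finset (Fin n), memR n t m I →
        0 < ∑ s, ∑ j ∈ I s, α s j) ∧
      (∀ t : ℕ, 1 ≤ t → t ≤ n - r → ∀ P : Fin m → Finset (Fin (n - r)),
        memR (n - r) t m P →
        ∑ s, ∑ q ∈ P s, α s ((Fin.castLE (Nat.sub_le n r)) q).rev < 0) := by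
  have hm0 : 0 < m := by omega
  set C : ℝ := ((m : ℝ) * ((n : ℝ) + (r : ℝ) + 1)) / 2 - 5/4 with hC
  refine ⟨fun s j => (if (s : ℕ) = 0 then C else 0) - (((j : ℕ) : ℝ) + 1)
      + (if (s : ℕ) = 0 ∧ i ≤ (j : ℕ) then (1 : ℝ) else 0), ?_, ?_, ?_, ?_, ?_⟩
  · -- Antitone
    intro j j' hjj
    have hj : (j : ℕ) ≤ (j' : ℕ) := hjj
    simp only [true_and, if_pos rfl]
    by_cases h2 : i ≤ (j' : ℕ)
    · by_cases h1 : i ≤ (j : ℕ)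
      · rw [if_pos h2, if_pos h1]
        have : ((j : ℕ) : ℝ) ≤ ((j' : ℕ) : ℝ) := by exact_mod_cast hj
        linarith
      · rw [if_pos h2, if_neg h1]
        have : ((j : ℕ) : ℝ) + 1 ≤ ((j' : ℕ) : ℝ) := by
          have : (j : ℕ) + 1 ≤ (j' : ℕ) := by omega
          exact_mod_cast this
        linarith
    · rw [if_neg h2, if_neg (fun h1 => h2 (le_trans h1 hj))]
      have : ((j : ℕ) : ℝ) ≤ ((j' : ℕ) : ℝ) := by exact_mod_cast hj
      linarith
  · -- tie / strict at consecutive indices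
    intro j h
    constructor
    · intro hj
      simp only [true_and, if_pos rfl]
      have h1 : ¬ i ≤ (j : ℕ) := by omega
      have h2 : i ≤ (j : ℕ) + 1 := by omega
      rw [if_neg h1, if_pos h2]
      push_cast
      ring
    · intro hj
      simp only [true_and, if_pos rfl]
      by_cases h1 : i ≤ (j : ℕ)
      · have h2 : i ≤ (j : ℕ) + 1 := by omega
        rw [if_pos h1, if_pos h2]
        push_cast
        linarith
      · have h2 : ¬ i ≤ (j : ℕ) + 1 := by omega
        rw [if_neg h1, if_neg h2]
        push_cast
        linarith
  · -- StrictAnti for s ≠ 0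
    intro s hs j j' hjj
    have hs0 : (s : ℕ) ≠ 0 := fun h0 => hs (Fin.ext h0)
    simp only [if_neg hs0, false_and, if_neg (fun h : (s:ℕ) = 0 ∧ _ => hs0 h.1)]
    have : ((j : ℕ) : ℝ) < ((j' : ℕ) : ℝ) := by exact_mod_cast (hjj : (j:ℕ) < (j':ℕ))
    linarith
  · -- major
    intro t ht htn I hmem
    obtain ⟨hcard, hcoeff⟩ := hmem
    have hkey := key_sum n t m I hcard (by rw [hcoeff]; exact one_ne_zero)
    have hsplit := sum_split m hm0 C i t I (fun j => (j : ℕ)) hcard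
    rw [hsplit]
    have hcast := congrArg (fun x : ℕ => (x : ℝ)) hkey
    push_cast [Nat.cast_sub htn] at hcast
    rw [hcast]
    set TR : ℝ := ∑ k : Fin t, (((k : ℕ) : ℝ) + 1) with hTR
    have h2T := congrArg (fun x : ℕ => (x : ℝ)) (two_T t)
    push_cast at h2T
    have hTRval : TR = (t : ℝ) * ((t : ℝ) + 1) / 2 := by rw [hTR]; linarith [h2T]
    have hk0 : (0 : ℝ) ≤ ∑ j ∈ I ⟨0, hm0⟩, (if i ≤ (j : ℕ) then (1 : ℝ) else 0) :=
      Finset.sum_nonneg fun j _ => by split <;> norm_num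
    have ht1 : (1 : ℝ) ≤ (t : ℝ) := by exact_mod_cast ht
    have htn' : (t : ℝ) ≤ (n : ℝ) := by exact_mod_cast htn
    have hr1 : (1 : ℝ) ≤ (r : ℝ) := by exact_mod_cast hr
    have hm3 : (3 : ℝ) ≤ (m : ℝ) := by exact_mod_cast hm
    rw [hTRval, hC]
    linarith [arith_major (t:ℝ) (n:ℝ) (r:ℝ) (m:ℝ)
      (∑ j ∈ I ⟨0, hm0⟩, (if i ≤ (j : ℕ) then (1 : ℝ) else 0)) ht1 htn' hm3 hr1 hk0]
  · -- rank
    intro t ht htn' P hmem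
    obtain ⟨hcard, hcoeff⟩ := hmem
    have hkey := key_sum (n - r) t m P hcard (by rw [hcoeff]; exact one_ne_zero)
    -- rewrite the values of the rev indices
    have hval : ∀ q : Fin (n - r),
        (((Fin.castLE (Nat.sub_le n r)) q).rev : ℕ) = n - ((q : ℕ) + 1) := by
      intro q
      rw [Fin.val_rev]
      rfl
    have hrw : (∑ s : Fin m, ∑ q ∈ P s,
          ((if (s : ℕ) = 0 then C else 0)
            - (((((Fin.castLE (Nat.sub_le n r)) q).rev : ℕ) : ℝ) + 1)
            + (if (s : ℕ) = 0 ∧ i ≤ (((Fin.castLE (Nat.sub_le n r)) q).rev : ℕ)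
                then (1 : ℝ) else 0)))
        = ∑ s : Fin m, ∑ q ∈ P s,
          ((if (s : ℕ) = 0 then C else 0) - (((n - ((q : ℕ) + 1) : ℕ) : ℝ) + 1)
            + (if (s : ℕ) = 0 ∧ i ≤ (n - ((q : ℕ) + 1)) then (1 : ℝ) else 0)) := by
      refine Finset.sum_congr rfl fun s _ => Finset.sum_congr rfl fun q _ => ?_
      rw [hval q]
    rw [hrw, sum_split m hm0 C i t P (fun q => n - ((q : ℕ) + 1)) hcard]
    -- second sum: ∑∑ ((n - (q+1)) + 1) = m * t * (n+1) - ∑∑ (q+1)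
    have hq1n : ∀ q : Fin (n - r), (q : ℕ) + 1 ≤ n := fun q => by
      have := q.isLt; omega
    have hsum2 : (∑ s : Fin m, ∑ q ∈ P s, (((n - ((q : ℕ) + 1) : ℕ) : ℝ) + 1))
        = (m : ℝ) * ((t : ℝ) * ((n : ℝ) + 1)) - ((∑ s : Fin m, ∑ q ∈ P s, ((q : ℕ) + 1) : ℕ) : ℝ) := by
      have hin : ∀ s : Fin m, ∑ q ∈ P s, (((n - ((q : ℕ) + 1) : ℕ) : ℝ) + 1)
          = (t : ℝ) * ((n : ℝ) + 1) - ∑ q ∈ P s, (((q : ℕ) : ℝ) + 1) := by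
        intro s
        have : ∀ q ∈ P s, (((n - ((q : ℕ) + 1) : ℕ) : ℝ) + 1)
            = ((n : ℝ) + 1) - (((q : ℕ) : ℝ) + 1) := by
          intro q _
          rw [Nat.cast_sub (hq1n q)]
          push_cast
          ring
        rw [Finset.sum_congr rfl this, Finset.sum_sub_distrib, Finset.sum_const, hcard s,
          nsmul_eq_mul]
      rw [Finset.sum_congr rfl fun s _ => hin s, Finset.sum_sub_distrib, Finset.sum_const,
        Finset.card_univ, Fintype.card_fin, nsmul_eq_mul]
      push_cast
      ring
    rw [hsum2]
    have hnrt : ((n - r - t : ℕ) : ℝ) = (n : ℝ) - (r : ℝ) - (t : ℝ) := by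
      rw [Nat.cast_sub htn', Nat.cast_sub hrn]
    rw [hkey]
    push_cast [hnrt]
    set TR : ℝ := ∑ k : Fin t, (((k : ℕ) : ℝ) + 1) with hTR
    have h2T := congrArg (fun x : ℕ => (x : ℝ)) (two_T t)
    push_cast at h2T
    have hTRval : TR = (t : ℝ) * ((t : ℝ) + 1) / 2 := by rw [hTR]; linarith [h2T]
    have hkt : (∑ q ∈ P ⟨0, hm0⟩, (if i ≤ n - ((q : ℕ) + 1) then (1 : ℝ) else 0)) ≤ (t : ℝ) := by
      have hb := Finset.sum_le_card_nsmul (P ⟨0, hm0⟩)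
        (fun q => (if i ≤ n - ((q : ℕ) + 1) then (1 : ℝ) else 0)) 1
        (fun q _ => by split <;> norm_num)
      rw [hcard ⟨0, hm0⟩, nsmul_eq_mul, mul_one] at hb
      exact hb
    have ht1 : (1 : ℝ) ≤ (t : ℝ) := by exact_mod_cast ht
    have htn2 : (t : ℝ) ≤ (n : ℝ) - (r : ℝ) := by
      have := (Nat.cast_le (α := ℝ)).mpr htn'
      rw [Nat.cast_sub hrn] at this
      exact this
    have hr1 : (1 : ℝ) ≤ (r : ℝ) := by exact_mod_cast hr
    have hm3 : (3 : ℝ) ≤ (m : ℝ) := by exact_mod_cast hm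
    rw [hTRval, hC]
    linarith [arith_rank (t:ℝ) (n:ℝ) (r:ℝ) (m:ℝ)
      (∑ q ∈ P ⟨0, hm0⟩, (if i ≤ n - ((q : ℕ) + 1) then (1 : ℝ) else 0)) ht1 htn2 hm3 hkt]
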